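/- Let X be a Banach space and let G : X → X be a bounded linear operator of positive type with constant κ > 0. For every integer m ≥ 1 and every integer p with 0 ≤ p ≤ m, the m-fold Lavrentiev companion operator S_β = β^m (G + βI)^{-m} satisfies ‖S_β G^p‖ ≤ (κ+1)^m β^p for all β > 0. -/

import Mathlib

set_option maxHeartbeats 1000000
set_option synthInstance.maxHeartbeats 1000000

/-- For a positive type operator `G` with constant `κ` (with `B β` denoting the inverse of
`G + βI`), the `m`-fold Lavrentiev companion operator `S_β = β^m (G + βI)^{-m}` satisfies
`‖S_β G^p‖ ≤ (κ+1)^m β^p` for all integers `0 ≤ p ≤ m` and all `β > 0`. -/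
theorem lavrentiev_companion_estimate
    {X : Type*} [NormedAddCommGroup X] [NormedSpace ℝ X] [CompleteSpace X]
    (G : X →L[ℝ] X) (κ : ℝ) (hκ : 0 < κ) (B : ℝ → X →L[ℝ] X)
    (hB : ∀ β : ℝ, 0 < β →
      B β * (G + β • (1 : X →L[ℝ] X)) = 1 ∧ (G + β • (1 : X →L[ℝ] X)) * B β = 1 ∧
      ‖B β‖ ≤ κ / β)
    (m : ℕ) (hm : 1 ≤ m) (p : ℕ) (hp : p ≤ m) (β : ℝ) (hβ : 0 < β) :
    ‖(β ^ m • (B β) ^ m) * G ^ p‖ ≤ (κ + 1) ^ m * β ^ p := by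
  obtain ⟨h1, h2, h3⟩ := hB β hβ
  set Bβ := B β with hBβ
  have e1 : Bβ * G + β • Bβ = 1 := by
    rw [mul_add] at h1; simpa [mul_smul_comm] using h1
  have e2 : G * Bβ + β • Bβ = 1 := by
    rw [add_mul] at h2; simpa [smul_mul_assoc] using h2
  have hcomm : Commute Bβ G := add_right_cancel (e1.trans e2.symm)
  have hGB : Bβ * G = 1 - β • Bβ := eq_sub_of_add_eq e1
  have h4 : ‖β • Bβ‖ = β * ‖Bβ‖ := by
    rw [norm_smul β Bβ, Real.norm_eq_abs, abs_of_pos hβ]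
  have h5 : ‖Bβ‖ * β ≤ κ := (le_div_iff₀ hβ).mp h3
  have hid : ‖(1 : X →L[ℝ] X)‖ ≤ 1 := ContinuousLinearMap.norm_id_le
  have hnGB : ‖Bβ * G‖ ≤ κ + 1 := by
    rw [hGB]
    have hsub : ‖(1 : X →L[ℝ] X) - β • Bβ‖ ≤ ‖(1 : X →L[ℝ] X)‖ + ‖β • Bβ‖ :=
      norm_sub_le _ _
    rw [h4] at hsub
    nlinarith
  have hpow : ∀ (A : X →L[ℝ] X) (n : ℕ), ‖A ^ n‖ ≤ ‖A‖ ^ n := by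
    intro A n
    cases n with
    | zero => simpa using hid
    | succ k => exact norm_pow_le' A k.succ_pos
  have key : Bβ ^ m * G ^ p = Bβ ^ (m - p) * (Bβ * G) ^ p := by
    rw [hcomm.mul_pow, ← mul_assoc, ← pow_add, Nat.sub_add_cancel hp]
  have hA : ‖Bβ ^ (m - p) * (Bβ * G) ^ p‖ ≤ (κ / β) ^ (m - p) * (κ + 1) ^ p := by
    calc ‖Bβ ^ (m - p) * (Bβ * G) ^ p‖
        ≤ ‖Bβ ^ (m - p)‖ * ‖(Bβ * G) ^ p‖ := norm_mul_le _ _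
      _ ≤ ‖Bβ‖ ^ (m - p) * ‖Bβ * G‖ ^ p :=
          mul_le_mul (hpow _ _) (hpow _ _) (norm_nonneg _)
            (pow_nonneg (norm_nonneg _) _)
      _ ≤ (κ / β) ^ (m - p) * (κ + 1) ^ p :=
          mul_le_mul (pow_le_pow_left₀ (norm_nonneg _) h3 _)
            (pow_le_pow_left₀ (norm_nonneg _) hnGB _)
            (pow_nonneg (norm_nonneg _) _) (pow_nonneg (div_pos hκ hβ).le _)
  have h6 : ‖(β ^ m • Bβ ^ m) * G ^ p‖ = β ^ m * ‖Bβ ^ (m - p) * (Bβ * G) ^ p‖ := by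
    rw [smul_mul_assoc, key, norm_smul (β ^ m) (Bβ ^ (m - p) * (Bβ * G) ^ p),
      Real.norm_eq_abs, abs_of_pos (pow_pos hβ m)]
  have step2 : β ^ m * ((κ / β) ^ (m - p) * (κ + 1) ^ p)
      = β ^ p * (κ ^ (m - p) * (κ + 1) ^ p) := by
    have hβm : β ^ m = β ^ p * β ^ (m - p) := by
      rw [← pow_add, Nat.add_sub_cancel' hp]
    rw [hβm, div_pow]
    field_simp
  have step3 : β ^ p * (κ ^ (m - p) * (κ + 1) ^ p)
      ≤ β ^ p * ((κ + 1) ^ (m - p) * (κ + 1) ^ p) := by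
    have : κ ^ (m - p) ≤ (κ + 1) ^ (m - p) :=
      pow_le_pow_left₀ hκ.le (by linarith) _
    have hk1 : (0:ℝ) ≤ (κ + 1) ^ p := pow_nonneg (by linarith) _
    exact mul_le_mul_of_nonneg_left (mul_le_mul_of_nonneg_right this hk1)
      (pow_nonneg hβ.le p)
  have step4 : β ^ p * ((κ + 1) ^ (m - p) * (κ + 1) ^ p) = (κ + 1) ^ m * β ^ p := by
    rw [← pow_add, Nat.sub_add_cancel hp]; ring
  calc ‖(β ^ m • Bβ ^ m) * G ^ p‖
      = β ^ m * ‖Bβ ^ (m - p) * (Bβ * G) ^ p‖ := h6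
    _ ≤ β ^ m * ((κ / β) ^ (m - p) * (κ + 1) ^ p) :=
        mul_le_mul_of_nonneg_left hA (pow_pos hβ m).le
    _ = β ^ p * (κ ^ (m - p) * (κ + 1) ^ p) := step2
    _ ≤ β ^ p * ((κ + 1) ^ (m - p) * (κ + 1) ^ p) := step3
    _ = (κ + 1) ^ m * β ^ p := step4
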